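/- Let n ≥ 1 and let N ∈ Mat_n(ℂ) be a matrix such that q(N) is invertible. Then: (a) any two formal power series S, T ∈ Mat_n(ℂ)[[x]] satisfying q(S)·dS/dx = p(S), q(T)·dT/dx = p(T), and having the same constant coefficient S_{(0)} = T_{(0)} = N are equal; (b) if S ∈ Mat_n(ℂ)[[x]] satisfies q(S)·dS/dx = p(S) with constant coefficient N, then every coefficient S_{(m)} of S is a polynomial in N with complex coefficients (in particular the coefficients of S commute pairwise). -/

import Mathlib

/-- The formal derivative of a power series (over a possibly noncommutative ring). -/
noncomputable def psderiv {R : Type*} [Ring R] (S : PowerSeries R) : PowerSeries R :=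
  PowerSeries.mk fun m => (m + 1) • PowerSeries.coeff (m + 1) S

open Polynomial PowerSeries Finset

section aux

variable {R : Type*} [Ring R] [Algebra ℂ R]

lemma psderiv_coeff (S : PowerSeries R) (m : ℕ) :
    PowerSeries.coeff m (psderiv S) = (m + 1) • PowerSeries.coeff (m + 1) S := by
  simp [psderiv]

/-- constantCoeff as an algebra hom. -/
noncomputable def ccAlg (R : Type*) [Ring R] [Algebra ℂ R] : PowerSeries R →ₐ[ℂ] R :=
  { (PowerSeries.constantCoeff : PowerSeries R →+* R) with
    commutes' := fun r => by simp [PowerSeries.algebraMap_apply] }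

lemma constantCoeff_aeval (S : PowerSeries R) (h : Polynomial ℂ) :
    PowerSeries.constantCoeff (Polynomial.aeval S h)
      = Polynomial.aeval (PowerSeries.constantCoeff S) h := by
  have := Polynomial.aeval_algHom_apply (ccAlg R) S h
  simpa [ccAlg] using this.symm

lemma coeff_pow_congr {S T : PowerSeries R} {m : ℕ}
    (h : ∀ k ≤ m, PowerSeries.coeff k S = PowerSeries.coeff k T) :
    ∀ j, ∀ k ≤ m, PowerSeries.coeff k (S ^ j) = PowerSeries.coeff k (T ^ j) := by
  intro j
  induction j with
  | zero => intro k _; simp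
  | succ j ih =>
    intro k hk
    rw [pow_succ, pow_succ, PowerSeries.coeff_mul, PowerSeries.coeff_mul]
    refine Finset.sum_congr rfl fun x hx => ?_
    rw [Finset.HasAntidiagonal.mem_antidiagonal] at hx
    rw [ih x.1 (le_trans (le_trans (Nat.le_add_right _ _) hx.le) hk),
      h x.2 (le_trans (le_trans (Nat.le_add_left _ _) hx.le) hk)]

lemma coeff_aeval_congr {S T : PowerSeries R} {m : ℕ}
    (h : ∀ k ≤ m, PowerSeries.coeff k S = PowerSeries.coeff k T)
    (f : Polynomial ℂ) :
    ∀ k ≤ m, PowerSeries.coeff k (Polynomial.aeval S f)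
      = PowerSeries.coeff k (Polynomial.aeval T f) := by
  intro k hk
  rw [Polynomial.aeval_eq_sum_range (p := f) S, Polynomial.aeval_eq_sum_range (p := f) T,
    map_sum, map_sum]
  refine Finset.sum_congr rfl fun i _ => ?_
  rw [PowerSeries.coeff_smul, PowerSeries.coeff_smul, coeff_pow_congr h i k hk]

lemma coeff_pow_mem {A : Subalgebra ℂ R} {S : PowerSeries R} {m : ℕ}
    (h : ∀ k ≤ m, PowerSeries.coeff k S ∈ A) :
    ∀ j, ∀ k ≤ m, PowerSeries.coeff k (S ^ j) ∈ A := by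
  intro j
  induction j with
  | zero =>
    intro k _
    rw [pow_zero, PowerSeries.coeff_one]
    split <;> simp [Subalgebra.one_mem, Subalgebra.zero_mem]
  | succ j ih =>
    intro k hk
    rw [pow_succ, PowerSeries.coeff_mul]
    refine Subalgebra.sum_mem _ fun x hx => ?_
    rw [Finset.HasAntidiagonal.mem_antidiagonal] at hx
    exact Subalgebra.mul_mem _
      (ih x.1 (le_trans (le_trans (Nat.le_add_right _ _) hx.le) hk))
      (h x.2 (le_trans (le_trans (Nat.le_add_left _ _) hx.le) hk))

lemma coeff_aeval_mem {A : Subalgebra ℂ R} {S : PowerSeries R} {m : ℕ}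
    (h : ∀ k ≤ m, PowerSeries.coeff k S ∈ A) (f : Polynomial ℂ) :
    ∀ k ≤ m, PowerSeries.coeff k (Polynomial.aeval S f) ∈ A := by
  intro k hk
  rw [Polynomial.aeval_eq_sum_range (p := f) S, map_sum]
  refine Subalgebra.sum_mem _ fun i _ => ?_
  rw [PowerSeries.coeff_smul]
  exact Subalgebra.smul_mem _ (coeff_pow_mem h i k hk) _

/-- The key recursion extracted from the ODE. -/
lemma key_recursion {p q : Polynomial ℂ} {S : PowerSeries R}
    (hODE : Polynomial.aeval S q * psderiv S = Polynomial.aeval S p) (m : ℕ) :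
    PowerSeries.coeff 0 (Polynomial.aeval S q) * ((m + 1) • PowerSeries.coeff (m + 1) S)
      = PowerSeries.coeff m (Polynomial.aeval S p)
        - ∑ i ∈ Finset.range m, PowerSeries.coeff (i + 1) (Polynomial.aeval S q)
            * ((m - i) • PowerSeries.coeff (m - i) S) := by
  have h := congrArg (PowerSeries.coeff m) hODE
  rw [PowerSeries.coeff_mul, Finset.Nat.sum_antidiagonal_eq_sum_range_succ_mk,
    Finset.sum_range_succ'] at h
  simp only [psderiv_coeff] at h
  have hsum : ∑ i ∈ Finset.range m,
      PowerSeries.coeff (i + 1) (Polynomial.aeval S q)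
        * ((m - (i + 1) + 1) • PowerSeries.coeff (m - (i + 1) + 1) S)
      = ∑ i ∈ Finset.range m, PowerSeries.coeff (i + 1) (Polynomial.aeval S q)
          * ((m - i) • PowerSeries.coeff (m - i) S) := by
    refine Finset.sum_congr rfl fun i hi => ?_
    rw [Finset.mem_range] at hi
    have : m - (i + 1) + 1 = m - i := by omega
    rw [this]
  rw [hsum] at h
  simp only [Nat.sub_zero] at h
  exact eq_sub_of_add_eq (by rw [add_comm]; exact h)

end aux

/-- The inverse of an invertible matrix `A` over `ℂ` is a polynomial in `A`. -/
lemma inv_poly {n : ℕ} (A : Matrix (Fin n) (Fin n) ℂ) (hA : IsUnit A) :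
    ∃ r : Polynomial ℂ, A * Polynomial.aeval A r = 1 ∧ Polynomial.aeval A r * A = 1 := by
  have hdet : A.charpoly.coeff 0 ≠ 0 := by
    have h1 : IsUnit A.det := (Matrix.isUnit_iff_isUnit_det A).mp hA
    have h2 := Matrix.det_eq_sign_charpoly_coeff A
    intro h0
    rw [h0, mul_zero] at h2
    rw [h2] at h1
    exact h1.ne_zero rfl
  have hchi := Matrix.aeval_self_charpoly A
  set d := A.charpoly.divX with hdd
  have hd : Polynomial.aeval A d * A + (A.charpoly.coeff 0) • (1 : Matrix (Fin n) (Fin n) ℂ) = 0 := by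
    have h3 := congrArg (Polynomial.aeval A) (Polynomial.divX_mul_X_add A.charpoly)
    rw [map_add, map_mul, Polynomial.aeval_X, hchi, Polynomial.aeval_C,
      Algebra.algebraMap_eq_smul_one] at h3
    exact h3
  have hcomm : A * Polynomial.aeval A d = Polynomial.aeval A d * A := by
    have h1 : A * Polynomial.aeval A d = Polynomial.aeval A (Polynomial.X * d) := by
      rw [map_mul, Polynomial.aeval_X]
    have h2 : Polynomial.aeval A d * A = Polynomial.aeval A (d * Polynomial.X) := by
      rw [map_mul, Polynomial.aeval_X]
    rw [h1, h2, mul_comm]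
  have hda : Polynomial.aeval A d * A = -((A.charpoly.coeff 0) • 1) := by
    rw [eq_neg_iff_add_eq_zero]; exact hd
  refine ⟨-(A.charpoly.coeff 0)⁻¹ • d, ?_, ?_⟩
  · rw [map_smul, mul_smul_comm, hcomm, hda]
    simp [smul_smul, inv_mul_cancel₀ hdet]
  · rw [map_smul, smul_mul_assoc, hda]
    simp [smul_smul, inv_mul_cancel₀ hdet]

/-- (a) a matrix power series solution of `q(S)·dS/dx = p(S)` is
uniquely determined by its constant coefficient `N` (assuming `q(N)` invertible);
(b) all its coefficients are polynomials in `N`. -/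
theorem stmt_11 (p q : Polynomial ℂ) (hp : p ≠ 0) (hq : q ≠ 0) (hpq : IsCoprime p q)
    (n : ℕ) (hn : 1 ≤ n) (N : Matrix (Fin n) (Fin n) ℂ)
    (hN : IsUnit (Polynomial.aeval N q)) :
    (∀ S T : PowerSeries (Matrix (Fin n) (Fin n) ℂ),
      Polynomial.aeval S q * psderiv S = Polynomial.aeval S p →
      Polynomial.aeval T q * psderiv T = Polynomial.aeval T p →
      PowerSeries.constantCoeff S = N →
      PowerSeries.constantCoeff T = N →
      S = T) ∧
    (∀ S : PowerSeries (Matrix (Fin n) (Fin n) ℂ),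
      Polynomial.aeval S q * psderiv S = Polynomial.aeval S p →
      PowerSeries.constantCoeff S = N →
      ∀ m : ℕ, ∃ c : Polynomial ℂ,
        PowerSeries.coeff m S = Polynomial.aeval N c) := by
  obtain ⟨r, hr1, hr2⟩ := inv_poly (Polynomial.aeval N q) hN
  set B := Polynomial.aeval (Polynomial.aeval N q) r with hB
  constructor
  · intro S T hS hT hS0 hT0
    refine PowerSeries.ext fun m => ?_
    induction m using Nat.strong_induction_on with
    | _ m ih =>
      match m with
      | 0 =>
        simp only [PowerSeries.coeff_zero_eq_constantCoeff_apply, hS0, hT0]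
      | Nat.succ m =>
        have hle : ∀ k ≤ m, PowerSeries.coeff k S = PowerSeries.coeff k T :=
          fun k hk => ih k (Nat.lt_succ_of_le hk)
        have kS := key_recursion (p := p) (q := q) hS m
        have kT := key_recursion (p := p) (q := q) hT m
        have h0S : PowerSeries.coeff 0 (Polynomial.aeval S q) = Polynomial.aeval N q := by
          rw [PowerSeries.coeff_zero_eq_constantCoeff, constantCoeff_aeval, hS0]
        have h0T : PowerSeries.coeff 0 (Polynomial.aeval T q) = Polynomial.aeval N q := by
          rw [PowerSeries.coeff_zero_eq_constantCoeff, constantCoeff_aeval, hT0]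
        rw [h0S] at kS
        rw [h0T] at kT
        have hRHS : PowerSeries.coeff m (Polynomial.aeval S p)
              - ∑ i ∈ Finset.range m, PowerSeries.coeff (i + 1) (Polynomial.aeval S q)
                  * ((m - i) • PowerSeries.coeff (m - i) S)
            = PowerSeries.coeff m (Polynomial.aeval T p)
              - ∑ i ∈ Finset.range m, PowerSeries.coeff (i + 1) (Polynomial.aeval T q)
                  * ((m - i) • PowerSeries.coeff (m - i) T) := by
          rw [coeff_aeval_congr hle p m le_rfl]
          congr 1
          refine Finset.sum_congr rfl fun i hi => ?_
          rw [Finset.mem_range] at hi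
          rw [coeff_aeval_congr hle q (i + 1) (by omega), hle (m - i) (by omega)]
        have heq : Polynomial.aeval N q * ((m + 1) • PowerSeries.coeff (m + 1) S)
            = Polynomial.aeval N q * ((m + 1) • PowerSeries.coeff (m + 1) T) := by
          rw [kS, kT, hRHS]
        have h2 : (m + 1) • PowerSeries.coeff (m + 1) S
            = (m + 1) • PowerSeries.coeff (m + 1) T := by
          have h3 := congrArg (fun x => B * x) heq
          simp only [← mul_assoc, hr2, one_mul] at h3
          exact h3
        rw [← Nat.cast_smul_eq_nsmul ℂ, ← Nat.cast_smul_eq_nsmul ℂ] at h2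
        have hne : ((m + 1 : ℕ) : ℂ) ≠ 0 := by exact_mod_cast Nat.succ_ne_zero m
        exact smul_right_injective (Matrix (Fin n) (Fin n) ℂ) hne h2
  · intro S hS hS0
    have hBmem : B ∈ (Polynomial.aeval (R := ℂ) N).range := by
      refine ⟨r.comp q, ?_⟩
      show Polynomial.aeval N (r.comp q) = B
      rw [Polynomial.aeval_comp, hB]
    have hmem : ∀ m, PowerSeries.coeff m S ∈ (Polynomial.aeval (R := ℂ) N).range := by
      intro m
      induction m using Nat.strong_induction_on with
      | _ m ih =>
        match m with
        | 0 =>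
          rw [PowerSeries.coeff_zero_eq_constantCoeff, hS0]
          exact ⟨Polynomial.X, by simp⟩
        | Nat.succ m =>
          have hle : ∀ k ≤ m, PowerSeries.coeff k S ∈ (Polynomial.aeval (R := ℂ) N).range :=
            fun k hk => ih k (Nat.lt_succ_of_le hk)
          have kS := key_recursion (p := p) (q := q) hS m
          have h0S : PowerSeries.coeff 0 (Polynomial.aeval S q) = Polynomial.aeval N q := by
            rw [PowerSeries.coeff_zero_eq_constantCoeff, constantCoeff_aeval, hS0]
          rw [h0S] at kS
          have hX : PowerSeries.coeff (m + 1) S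
              = ((m : ℂ) + 1)⁻¹ • (B *
                (PowerSeries.coeff m (Polynomial.aeval S p)
                  - ∑ i ∈ Finset.range m, PowerSeries.coeff (i + 1) (Polynomial.aeval S q)
                      * ((m - i) • PowerSeries.coeff (m - i) S))) := by
            rw [← kS, ← mul_assoc, hr2, one_mul, ← Nat.cast_smul_eq_nsmul ℂ, smul_smul,
              Nat.cast_add, Nat.cast_one, inv_mul_cancel₀ (by exact_mod_cast Nat.succ_ne_zero m),
              one_smul]
          rw [hX]
          refine Subalgebra.smul_mem _ (Subalgebra.mul_mem _ hBmem (Subalgebra.sub_mem _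
            (coeff_aeval_mem hle p m le_rfl) (Subalgebra.sum_mem _ fun i hi => ?_))) _
          rw [Finset.mem_range] at hi
          refine Subalgebra.mul_mem _ (coeff_aeval_mem hle q (i + 1) (by omega)) ?_
          exact nsmul_mem (hle (m - i) (by omega)) _
    intro m
    obtain ⟨c, hc⟩ := hmem m
    exact ⟨c, hc.symm⟩
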